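/- Let F be a field, d ≥ 1, q ∈ F nonzero not a root of unity. The matrix E_q ∈ Mat_{d+1}(F), upper bidiagonal with (i,i)-entry q^{2i-d} and (i-1,i)-entry q^d - q^{2i-2-d}, is invertible, and its inverse is upper triangular with (i,j)-entry (q^{2(d-j+1)}; q²)_{j-i} · q^{d-2j} for 0 ≤ i ≤ j ≤ d and 0 below the diagonal. -/

import Mathlib

/-- q-Pochhammer symbol `(a;b)_n = ∏_{k<n} (1 - a b^k)`. -/
def qPoch {F : Type*} [Field F] (a b : F) (n : ℕ) : F :=
  ∏ k ∈ Finset.range n, (1 - a * b ^ k)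

/-- The upper bidiagonal matrix `E_q` with `(i,i)`-entry `q^{2i-d}` and
`(i-1,i)`-entry `q^d - q^{2i-2-d}`. -/
def Emat {F : Type*} [Field F] (d : ℕ) (q : F) :
    Matrix (Fin (d + 1)) (Fin (d + 1)) F :=
  Matrix.of fun i j =>
    if (i : ℕ) = (j : ℕ) then q ^ (2 * ((i : ℕ) : ℤ) - (d : ℤ))
    else if (i : ℕ) + 1 = (j : ℕ) then
      q ^ (d : ℤ) - q ^ (2 * ((j : ℕ) : ℤ) - 2 - (d : ℤ))
    else 0

/-- The claimed inverse of `E_q`: upper triangular with `(i,j)`-entry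
`(q^{2(d-j+1)}; q²)_{j-i} · q^{d-2j}` for `i ≤ j`. -/
def EmatInv {F : Type*} [Field F] (d : ℕ) (q : F) :
    Matrix (Fin (d + 1)) (Fin (d + 1)) F :=
  Matrix.of fun i j =>
    if (i : ℕ) ≤ (j : ℕ) then
      qPoch (q ^ (2 * ((d : ℤ) - ((j : ℕ) : ℤ) + 1))) (q ^ 2) ((j : ℕ) - (i : ℕ)) *
        q ^ ((d : ℤ) - 2 * ((j : ℕ) : ℤ))
    else 0

lemma qPoch_succ {F : Type*} [Field F] (a b : F) (n : ℕ) :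
    qPoch a b (n + 1) = qPoch a b n * (1 - a * b ^ n) := by
  simp [qPoch, Finset.prod_range_succ]

lemma key_diag {F : Type*} [Field F] (d i : ℕ) (q : F) (hq : q ≠ 0) :
    q ^ (2 * (i : ℤ) - (d : ℤ)) *
      (qPoch (q ^ (2 * ((d : ℤ) - (i : ℤ) + 1))) (q ^ 2) 0 * q ^ ((d : ℤ) - 2 * (i : ℤ)))
      = 1 := by
  simp only [qPoch, Finset.range_zero, Finset.prod_empty, one_mul]
  rw [← zpow_add₀ hq]
  norm_num

lemma key_off {F : Type*} [Field F] (d i j : ℕ) (q : F) (hq : q ≠ 0) (hij : i < j) :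
    q ^ (2 * (i : ℤ) - (d : ℤ)) *
      (qPoch (q ^ (2 * ((d : ℤ) - (j : ℤ) + 1))) (q ^ 2) (j - i) * q ^ ((d : ℤ) - 2 * (j : ℤ)))
    + (q ^ (d : ℤ) - q ^ (2 * ((i : ℤ) + 1) - 2 - (d : ℤ))) *
      (qPoch (q ^ (2 * ((d : ℤ) - (j : ℤ) + 1))) (q ^ 2) (j - (i + 1)) * q ^ ((d : ℤ) - 2 * (j : ℤ)))
      = 0 := by
  obtain ⟨n, hn⟩ : ∃ n, j - (i + 1) = n := ⟨_, rfl⟩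
  have hji : j - i = n + 1 := by omega
  have hjn : (j : ℤ) = (i : ℤ) + 1 + n := by
    have : j = i + 1 + n := by omega
    simp [this]
  rw [hn, hji, qPoch_succ]
  have hab : (q ^ (2 * ((d : ℤ) - (j : ℤ) + 1))) * (q ^ 2) ^ n
      = q ^ (2 * (d : ℤ) - 2 * (i : ℤ)) := by
    rw [← pow_mul, ← zpow_natCast q (2 * n), ← zpow_add₀ hq]
    congr 1
    push_cast
    rw [hjn]; ring
  rw [hab]
  have h1 : q ^ (2 * (i : ℤ) - (d : ℤ)) * q ^ (2 * (d : ℤ) - 2 * (i : ℤ)) = q ^ (d : ℤ) := by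
    rw [← zpow_add₀ hq]; congr 1; ring
  have h2 : q ^ (2 * ((i : ℤ) + 1) - 2 - (d : ℤ)) = q ^ (2 * (i : ℤ) - (d : ℤ)) := by
    congr 1; ring
  rw [h2]
  linear_combination (-(qPoch (q ^ (2 * ((d : ℤ) - (j : ℤ) + 1))) (q ^ 2) n *
    q ^ ((d : ℤ) - 2 * (j : ℤ)))) * h1

theorem stmt_11 {F : Type*} [Field F] (d : ℕ) (hd : 1 ≤ d) (q : F) (hq : q ≠ 0)
    (hroot : ∀ n : ℕ, 0 < n → q ^ n ≠ 1) :
    Emat d q * EmatInv d q = 1 ∧ EmatInv d q * Emat d q = 1 := by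
  have h1 : Emat d q * EmatInv d q = 1 := by
    ext i j
    rw [Matrix.mul_apply, Matrix.one_apply]
    by_cases hi : (i : ℕ) < d
    · -- i < d : two potentially nonzero terms
      set i1 : Fin (d + 1) := ⟨(i : ℕ) + 1, by omega⟩ with hi1
      have hi1v : (i1 : ℕ) = (i : ℕ) + 1 := rfl
      have hii1 : i ≠ i1 := by
        intro h
        have := congrArg Fin.val h
        omega
      rw [Finset.sum_eq_add_of_mem i i1 (Finset.mem_univ _) (Finset.mem_univ _) hii1
        (by
          rintro c _ ⟨hc1, hc2⟩
          have hc1' : (c : ℕ) ≠ (i : ℕ) := fun h => hc1 (Fin.ext h)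
          have hc2' : (c : ℕ) ≠ (i : ℕ) + 1 := fun h => hc2 (Fin.ext (by rw [hi1v, h]))
          have hz : Emat d q i c = 0 := by
            simp only [Emat, Matrix.of_apply]
            rw [if_neg (fun h => hc1' h.symm), if_neg (fun h => hc2' h.symm)]
          rw [hz, zero_mul])]
      have hEii : Emat d q i i = q ^ (2 * ((i : ℕ) : ℤ) - (d : ℤ)) := by
        simp [Emat]
      have hEii1 : Emat d q i i1 = q ^ (d : ℤ) - q ^ (2 * (((i : ℕ) : ℤ) + 1) - 2 - (d : ℤ)) := by
        simp only [Emat, Matrix.of_apply]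
        rw [if_neg (by omega), if_pos hi1v.symm, hi1v,
          show ((((i : ℕ) + 1 : ℕ)) : ℤ) = ((i : ℕ) : ℤ) + 1 by push_cast; ring]
      rw [hEii, hEii1]
      rcases lt_trichotomy ((j : ℕ)) ((i : ℕ)) with hji | hji | hji
      · -- j < i : everything vanishes
        have hj1 : EmatInv d q i j = 0 := by
          simp only [EmatInv, Matrix.of_apply]; rw [if_neg (by omega)]
        have hj2 : EmatInv d q i1 j = 0 := by
          simp only [EmatInv, Matrix.of_apply]; rw [if_neg (by omega)]
        rw [hj1, hj2, if_neg (fun h => by subst h; omega)]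
        ring
      · -- j = i : diagonal
        have hij' : j = i := Fin.ext hji
        subst hij'
        rw [if_pos rfl]
        have hj2 : EmatInv d q i1 j = 0 := by
          simp only [EmatInv, Matrix.of_apply]; rw [if_neg (by omega)]
        have hj1 : EmatInv d q j j =
            qPoch (q ^ (2 * ((d : ℤ) - ((j : ℕ) : ℤ) + 1))) (q ^ 2) 0 *
              q ^ ((d : ℤ) - 2 * ((j : ℕ) : ℤ)) := by
          simp only [EmatInv, Matrix.of_apply]
          rw [if_pos le_rfl, Nat.sub_self]
        rw [hj1, hj2, mul_zero, add_zero]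
        exact key_diag d j q hq
      · -- i < j : telescoping pair
        rw [if_neg (fun h => by subst h; omega)]
        have hj1 : EmatInv d q i j =
            qPoch (q ^ (2 * ((d : ℤ) - ((j : ℕ) : ℤ) + 1))) (q ^ 2) ((j : ℕ) - (i : ℕ)) *
              q ^ ((d : ℤ) - 2 * ((j : ℕ) : ℤ)) := by
          simp only [EmatInv, Matrix.of_apply]; rw [if_pos (by omega)]
        have hj2 : EmatInv d q i1 j =
            qPoch (q ^ (2 * ((d : ℤ) - ((j : ℕ) : ℤ) + 1))) (q ^ 2) ((j : ℕ) - ((i : ℕ) + 1)) *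
              q ^ ((d : ℤ) - 2 * ((j : ℕ) : ℤ)) := by
          simp only [EmatInv, Matrix.of_apply]; rw [if_pos (by omega)]
        rw [hj1, hj2]
        exact key_off d i j q hq hji
    · -- i = d : single nonzero term
      have hid : (i : ℕ) = d := by omega
      rw [Finset.sum_eq_single i
        (by
          intro c _ hc
          have hc' : (c : ℕ) ≠ (i : ℕ) := fun h => hc (Fin.ext h)
          have hz : Emat d q i c = 0 := by
            simp only [Emat, Matrix.of_apply]
            rw [if_neg (fun h => hc' h.symm), if_neg (by omega)]
          rw [hz, zero_mul])
        (fun h => absurd (Finset.mem_univ i) h)]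
      have hEii : Emat d q i i = q ^ (2 * ((i : ℕ) : ℤ) - (d : ℤ)) := by simp [Emat]
      rw [hEii]
      rcases lt_or_eq_of_le (Nat.le_of_lt_succ j.isLt) with hji | hji
      · -- j < d = i
        have hj1 : EmatInv d q i j = 0 := by
          simp only [EmatInv, Matrix.of_apply]; rw [if_neg (by omega)]
        rw [hj1, if_neg (fun h => by subst h; omega)]
        ring
      · -- j = d = i
        have hij : j = i := Fin.ext (by omega)
        subst hij
        rw [if_pos rfl]
        have hj1 : EmatInv d q j j =
            qPoch (q ^ (2 * ((d : ℤ) - ((j : ℕ) : ℤ) + 1))) (q ^ 2) 0 *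
              q ^ ((d : ℤ) - 2 * ((j : ℕ) : ℤ)) := by
          simp only [EmatInv, Matrix.of_apply]
          rw [if_pos le_rfl, Nat.sub_self]
        rw [hj1]
        exact key_diag d j q hq
  exact ⟨h1, mul_eq_one_comm.mp h1⟩
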